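/- arXiv:1410.0975 — 4 statements merged into one kernel-verified Lean document; each statement's English description precedes it below -/
import Mathlib

section
/- If H embeds into G and G satisfies the minimal condition on centralizers, then H satisfies the minimal condition on centralizers. -/
/-- If `H` embeds into `G` and `G` satisfies the minimal condition on centralizers,
then `H` satisfies the minimal condition on centralizers. -/
theorem min_centralizers_of_embedding {H G : Type*} [Group H] [Group G]
    (f : H →* G) (hf : Function.Injective f)
    (hG : ¬ ∃ C : ℕ → Subgroup G,
        (∀ n, ∃ A : Set G, C n = Subgroup.centralizer A) ∧ StrictAnti C) :
    ¬ ∃ C : ℕ → Subgroup H,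
        (∀ n, ∃ A : Set H, C n = Subgroup.centralizer A) ∧ StrictAnti C := by
  rintro ⟨C, hC, hanti⟩
  choose A hA using hC
  -- increasing unions of the generating sets
  set B : ℕ → Set H := fun n => ⋃ k ∈ Finset.range (n + 1), A k with hB
  have hBmono : Monotone B := by
    intro m n hmn
    intro x hx
    simp only [hB, Set.mem_iUnion, Finset.mem_range] at hx ⊢
    obtain ⟨k, hk, hxk⟩ := hx
    exact ⟨k, by omega, hxk⟩
  have hBC : ∀ n, Subgroup.centralizer (B n) = C n := by
    intro n
    ext x
    simp only [hB, Subgroup.mem_centralizer_iff, Set.mem_iUnion, Finset.mem_range]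
    constructor
    · intro h
      rw [hA n, Subgroup.mem_centralizer_iff]
      intro g hg
      exact h g ⟨n, Nat.lt_succ_self n, hg⟩
    · rintro hx g ⟨k, hk, hg⟩
      have hxk : x ∈ C k := hanti.antitone (Nat.lt_succ_iff.mp hk) hx
      rw [hA k, Subgroup.mem_centralizer_iff] at hxk
      exact hxk g hg
  refine hG ⟨fun n => Subgroup.centralizer (f '' B n), fun n => ⟨f '' B n, rfl⟩, ?_⟩
  apply strictAnti_nat_of_succ_lt
  intro n
  have hle : Subgroup.centralizer (f '' B (n + 1)) ≤ Subgroup.centralizer (f '' B n) :=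
    Subgroup.centralizer_le (Set.image_mono (f := f) (hBmono (Nat.le_succ n)))
  refine lt_of_le_of_ne hle ?_
  intro heq
  have hlt : C (n + 1) < C n := hanti (Nat.lt_succ_self n)
  obtain ⟨x, hxn, hxn1⟩ := SetLike.exists_of_lt hlt
  -- f x is in centralizer of f '' B n
  have hx1 : f x ∈ Subgroup.centralizer (f '' B n) := by
    rw [Subgroup.mem_centralizer_iff]
    rintro g ⟨b, hb, rfl⟩
    have : x ∈ Subgroup.centralizer (B n) := (hBC n).symm ▸ hxn
    rw [Subgroup.mem_centralizer_iff] at this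
    have := this b hb
    rw [← map_mul, ← map_mul, this]
  rw [← heq, Subgroup.mem_centralizer_iff] at hx1
  apply hxn1
  rw [← hBC (n + 1), Subgroup.mem_centralizer_iff]
  intro b hb
  have := hx1 (f b) ⟨b, hb, rfl⟩
  rw [← map_mul, ← map_mul] at this
  exact hf this
end

section
/- If G has no central factors and S is a group with trivial center that is simple (e.g., an infinite simple group), then G × S has no central factors. -/
/-- `G` has no central factors: whenever `L ≤ M` are normal subgroups of `G` with
`M/L` central in `G/L` (equivalently `⁅M, G⁆ ≤ L`), we have `M = L`. -/
def NoCentralFactors (G : Type*) [Group G] : Prop :=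
  ∀ L M : Subgroup G, L.Normal → M.Normal → L ≤ M →
    ⁅M, (⊤ : Subgroup G)⁆ ≤ L → M = L

open scoped commutatorElement

/-- If `G` has no central factors and `S` is a simple group with trivial center,
then `G × S` has no central factors. -/
theorem noCentralFactors_prod (G S : Type*) [Group G] [Group S]
    (hG : NoCentralFactors G) [IsSimpleGroup S] (hS : Subgroup.center S = ⊥) :
    NoCentralFactors (G × S) := by
  intro L M hL hM hLM hcomm
  -- the "G-slices"
  set L₁ : Subgroup G := L.comap (MonoidHom.inl G S) with hL₁def
  set M₁ : Subgroup G := M.comap (MonoidHom.inl G S) with hM₁def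
  have hL₁ : L₁.Normal := by
    constructor
    intro g hg x
    have := hL.conj_mem _ hg (x, 1)
    simpa [hL₁def, Subgroup.mem_comap] using this
  have hM₁ : M₁.Normal := by
    constructor
    intro g hg x
    have := hM.conj_mem _ hg (x, 1)
    simpa [hM₁def, Subgroup.mem_comap] using this
  have key : M₁ = L₁ := by
    apply hG L₁ M₁ hL₁ hM₁
    · intro g hg
      exact hLM hg
    · rw [Subgroup.commutator_le]
      intro g hg x _
      have hmem : ⁅((g, 1) : G × S), ((x, 1) : G × S)⁆ ∈ L :=
        hcomm (Subgroup.commutator_mem_commutator hg (Subgroup.mem_top _))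
      have heq : ⁅((g, 1) : G × S), ((x, 1) : G × S)⁆ = ((⁅g, x⁆ : G), (1 : S)) := by
        simp [commutatorElement_def, Prod.ext_iff]
      rw [heq] at hmem
      exact hmem
  -- the "S-slice" of L
  set S₂ : Subgroup S := L.comap (MonoidHom.inr G S) with hS₂def
  have hS₂ : S₂.Normal := by
    constructor
    intro s hs t
    have := hL.conj_mem _ hs (1, t)
    simpa [hS₂def, Subgroup.mem_comap] using this
  refine le_antisymm ?_ hLM
  rintro ⟨g, s⟩ hgs
  rcases IsSimpleGroup.eq_bot_or_eq_top_of_normal S₂ hS₂ with hbot | htop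
  · -- S₂ = ⊥ forces s ∈ center S = ⊥, so s = 1
    have hs1 : s = 1 := by
      have hcen : s ∈ Subgroup.center S := by
        rw [Subgroup.mem_center_iff]
        intro t
        have hmem : ⁅((1, t) : G × S), ((g, s) : G × S)⁆ ∈ L :=
          hcomm (by
            have := Subgroup.commutator_mem_commutator hgs (Subgroup.mem_top ((1, t) : G × S))
            have hinv : (⁅((g,s) : G × S), ((1,t) : G × S)⁆)⁻¹ ∈ (⁅M, (⊤ : Subgroup (G × S))⁆ : Subgroup (G × S)) := Subgroup.inv_mem _ this
            rwa [commutatorElement_inv] at hinv)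
        have heq : ⁅((1, t) : G × S), ((g, s) : G × S)⁆ = ((1 : G), (⁅t, s⁆ : S)) := by
          simp [commutatorElement_def, Prod.ext_iff]
        rw [heq] at hmem
        have h2 : ⁅t, s⁆ ∈ S₂ := hmem
        rw [hbot, Subgroup.mem_bot] at h2
        exact (commutatorElement_eq_one_iff_mul_comm.mp h2)
      rw [hS, Subgroup.mem_bot] at hcen
      exact hcen
    subst hs1
    have : g ∈ M₁ := hgs
    rw [key] at this
    exact this
  · -- S₂ = ⊤, so (1, s) ∈ L
    have hsL : ((1 : G), s) ∈ L := by
      have : s ∈ S₂ := by rw [htop]; trivial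
      exact this
    have hg1 : ((g, 1) : G × S) ∈ M := by
      have : ((g, s) : G × S) * ((1 : G), s)⁻¹ ∈ M := M.mul_mem hgs (M.inv_mem (hLM hsL))
      simpa using this
    have : g ∈ M₁ := hg1
    rw [key] at this
    have hgL : ((g, 1) : G × S) ∈ L := this
    have := L.mul_mem hgL hsL
    simpa using this
end

section
/- Let A, B be countable groups and let G = A ≀ B be their restricted wreath product. If N is a normal subgroup of G that intersects the top copy of B nontrivially, then N contains the direct sum of copies of the commutator subgroup [A,A] (i.e., [A,A]^{<B} ≤ N). -/
open Function

/-- The subgroup of finitely supported functions `B → H`, the base of the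
restricted wreath product `H ≀ B`. -/
def restrictedPi (H B : Type*) [Group H] [Group B] : Subgroup (B → H) where
  carrier := {f | (mulSupport f).Finite}
  one_mem' := by simp
  mul_mem' {a b} ha hb := (ha.union hb).subset (mulSupport_mul a b)
  inv_mem' {a} ha := by simpa using ha

/-- The shift action of `b : B` on functions `B → H`. -/
def shiftEquiv (H B : Type*) [Group H] [Group B] (b : B) : (B → H) ≃* (B → H) where
  toFun f := fun x => f (b⁻¹ * x)
  invFun f := fun x => f (b * x)
  left_inv f := by funext x; simp [← mul_assoc]
  right_inv f := by funext x; simp [← mul_assoc]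
  map_mul' f g := rfl

lemma shiftEquiv_mem {H B : Type*} [Group H] [Group B] (b : B) (f : B → H)
    (hf : f ∈ restrictedPi H B) : shiftEquiv H B b f ∈ restrictedPi H B := by
  have h : mulSupport (shiftEquiv H B b f) ⊆ (fun x => b * x) '' mulSupport f := by
    intro x hx
    exact ⟨b⁻¹ * x, hx, by simp⟩
  exact Set.Finite.subset (Set.Finite.image _ hf) h

/-- The shift action of `B` on the finitely supported functions `B → H`. -/
def shiftAut (H B : Type*) [Group H] [Group B] : B →* MulAut (restrictedPi H B) where
  toFun b :=
    { toFun := fun f => ⟨shiftEquiv H B b f, shiftEquiv_mem (H := H) b (f : B → H) f.2⟩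
      invFun := fun f => ⟨shiftEquiv H B b⁻¹ f, shiftEquiv_mem (H := H) b⁻¹ (f : B → H) f.2⟩
      left_inv := fun f => by
        ext x
        simp [shiftEquiv, ← mul_assoc]
      right_inv := fun f => by
        ext x
        simp [shiftEquiv, ← mul_assoc]
      map_mul' := fun f g => rfl }
  map_one' := by
    ext f x
    simp [shiftEquiv]
  map_mul' a b := by
    ext f x
    simp [shiftEquiv, mul_assoc]

/-- The restricted wreath product `H ≀ B`. -/
abbrev RestrictedWreath (H B : Type*) [Group H] [Group B] :=
  SemidirectProduct (restrictedPi H B) B (shiftAut H B)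


section WreathAux

open scoped Classical
open scoped commutatorElement

variable {A B : Type*} [Group A] [Group B]

lemma single_mem_restrictedPi (x : B) (a : A) : Pi.mulSingle x a ∈ restrictedPi A B := by
  refine Set.Finite.subset (Set.finite_singleton x) ?_
  intro y hy
  by_contra h
  exact hy (Pi.mulSingle_eq_of_ne (M := fun _ : B => A) (by simpa using h) a)

/-- The embedding `A →* A^{<B}` at coordinate `x`. -/
noncomputable def singleHom (x : B) : A →* restrictedPi A B :=
  (MonoidHom.mulSingle (fun _ : B => A) x).codRestrict _ (fun a => single_mem_restrictedPi x a)

@[simp] lemma singleHom_apply (x : B) (a : A) (y : B) :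
    ((singleHom x a : restrictedPi A B) : B → A) y = Pi.mulSingle (M := fun _ : B => A) x a y := rfl

lemma single_commElt_mem (N : Subgroup (RestrictedWreath A B)) (hN : N.Normal)
    (b : B) (hb : b ≠ 1) (hbN : SemidirectProduct.inr b ∈ N)
    (x : B) (a1 a2 : A) :
    SemidirectProduct.inl (singleHom x ⁅a1, a2⁆) ∈ N := by
  set f : restrictedPi A B := singleHom x a1 with hf
  set g : restrictedPi A B := singleHom x a2 with hg
  set h : restrictedPi A B := f * shiftAut A B b f⁻¹ with hh
  set u : RestrictedWreath A B :=
    SemidirectProduct.inl f * SemidirectProduct.inr b *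
      (SemidirectProduct.inl f)⁻¹ * (SemidirectProduct.inr b)⁻¹ with hu
  have huN : u ∈ N := by
    have h1 : SemidirectProduct.inl f * SemidirectProduct.inr b *
        (SemidirectProduct.inl f)⁻¹ ∈ N := hN.conj_mem _ hbN _
    simpa [hu, mul_assoc] using mul_mem h1 (inv_mem hbN)
  have hu_eq : u = SemidirectProduct.inl h := by
    rw [hu, hh]
    rw [show (SemidirectProduct.inl f)⁻¹ =
      (SemidirectProduct.inl f⁻¹ : RestrictedWreath A B) by simp,
      show (SemidirectProduct.inr b)⁻¹ =
      (SemidirectProduct.inr b⁻¹ : RestrictedWreath A B) by simp]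
    rw [mul_assoc, mul_assoc, ← mul_assoc (SemidirectProduct.inr b),
      ← SemidirectProduct.inl_aut, ← map_mul]
  have hzN : u * SemidirectProduct.inl g * u⁻¹ * (SemidirectProduct.inl g)⁻¹ ∈ N := by
    have h2 : SemidirectProduct.inl g * u⁻¹ * (SemidirectProduct.inl g)⁻¹ ∈ N :=
      hN.conj_mem _ (inv_mem huN) _
    simpa [mul_assoc] using mul_mem huN h2
  have hz_eq : u * SemidirectProduct.inl g * u⁻¹ * (SemidirectProduct.inl g)⁻¹ =
      SemidirectProduct.inl (singleHom x ⁅a1, a2⁆) := by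
    rw [hu_eq, ← map_inv, ← map_inv, ← map_mul, ← map_mul, ← map_mul]
    congr 1
    ext y
    have hcoe : ((h * g * h⁻¹ * g⁻¹ : restrictedPi A B) : B → A) y =
        (h : B → A) y * (g : B → A) y * ((h : B → A) y)⁻¹ * ((g : B → A) y)⁻¹ := rfl
    rw [hcoe]
    have hhy : (h : B → A) y = Pi.mulSingle (M := fun _ : B => A) x a1 y * (Pi.mulSingle (M := fun _ : B => A) x a1 (b⁻¹ * y))⁻¹ := by
      simp [hh, hf, shiftAut, shiftEquiv, singleHom]
      rfl
    by_cases hyx : y = x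
    · subst hyx
      have hne : b⁻¹ * y ≠ y := by
        intro hcontra
        have : b = 1 := by
          have h1 : b⁻¹ = 1 := mul_right_cancel (b := y) (by simpa using hcontra)
          simpa using h1
        exact hb this
      rw [hhy]
      simp [hg, Pi.mulSingle_eq_of_ne (M := fun _ : B => A) hne, commutatorElement_def]
    · have hgy : (g : B → A) y = 1 := by
        simp [hg, Pi.mulSingle_eq_of_ne (M := fun _ : B => A) hyx]
      rw [hgy]
      simp only [mul_one, mul_inv_cancel, inv_one]
      exact (Pi.mulSingle_eq_of_ne (M := fun _ : B => A) hyx _).symm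
  exact hz_eq ▸ hzN

end WreathAux

/-- Let `G = A ≀ B` be the restricted wreath product of countable groups `A` and `B`.
If `N` is a normal subgroup of `G` meeting the top copy of `B` nontrivially, then `N`
contains the direct sum of copies of the commutator subgroup `[A,A]`,
i.e. `[A,A]^{<B} ≤ N`. -/
theorem wreath_normal_meets_top (A B : Type*) [Group A] [Group B]
    [Countable A] [Countable B]
    (N : Subgroup (RestrictedWreath A B)) (hN : N.Normal)
    (hmeet : N ⊓ (SemidirectProduct.inr : B →* RestrictedWreath A B).range ≠ ⊥) :
    ∀ f : restrictedPi A B, (∀ x : B, (f : B → A) x ∈ commutator A) →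
      SemidirectProduct.inl f ∈ N := by
  -- extract a nontrivial element of the top copy of `B` lying in `N`
  classical
  obtain ⟨w, hw, hwne⟩ := Subgroup.nontrivial_iff_exists_ne_one _ |>.mp
    (Subgroup.nontrivial_iff_ne_bot _ |>.mpr hmeet)
  obtain ⟨b, rfl⟩ := hw.2
  have hb : b ≠ 1 := by
    rintro rfl
    exact hwne (map_one _)
  have hbN : SemidirectProduct.inr b ∈ N := hw.1
  -- singles with values in the commutator subgroup lie in `N`
  have hsingle : ∀ (x : B) (c : A), c ∈ commutator A →
      SemidirectProduct.inl (singleHom x c) ∈ N := by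
    intro x c hc
    have hle : commutator A ≤
        (N.comap (SemidirectProduct.inl :
          restrictedPi A B →* RestrictedWreath A B)).comap (singleHom x) := by
      rw [commutator_def, Subgroup.commutator_le]
      intro a1 _ a2 _
      simp only [Subgroup.mem_comap]
      simpa using single_commElt_mem N hN b hb hbN x a1 a2
    exact hle hc
  -- induction over the support
  have key : ∀ (s : Finset B) (f : restrictedPi A B),
      (∀ x : B, (f : B → A) x ∈ commutator A) →
      (mulSupport (f : B → A)) ⊆ ↑s → SemidirectProduct.inl f ∈ N := by
    intro s
    induction s using Finset.induction_on with
    | empty =>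
      intro f hf hsupp
      have : f = 1 := by
        ext y
        by_contra hy
        simpa using hsupp hy
      rw [this, map_one]
      exact one_mem N
    | @insert a s ha ih =>
      intro f hf hsupp
      set g : restrictedPi A B := f * (singleHom a ((f : B → A) a))⁻¹ with hg
      have hgval : ∀ y, (g : B → A) y =
          (f : B → A) y * (Pi.mulSingle (M := fun _ : B => A) a ((f : B → A) a) y)⁻¹ :=
        fun y => rfl
      have hgcomm : ∀ y : B, (g : B → A) y ∈ commutator A := by
        intro y
        rw [hgval]
        by_cases hy : y = a
        · subst hy; simpa using one_mem (commutator A)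
        · simp only [Pi.mulSingle_eq_of_ne (M := fun _ : B => A) hy]
          simpa using hf y
      have hgsupp : mulSupport (g : B → A) ⊆ ↑s := by
        intro y hy
        have hy1 : (g : B → A) y ≠ 1 := hy
        by_cases hya : y = a
        · subst hya
          exact absurd (by rw [hgval]; simp) hy1
        · have : (f : B → A) y ≠ 1 := by
            intro hfy
            exact hy1 (by rw [hgval, hfy, Pi.mulSingle_eq_of_ne (M := fun _ : B => A) hya]; simp)
          have := hsupp this
          simp only [Finset.coe_insert, Set.mem_insert_iff] at this
          exact this.resolve_left hya
      have hgN : SemidirectProduct.inl g ∈ N := ih g hgcomm hgsupp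
      have hfN : f = g * singleHom a ((f : B → A) a) := by
        rw [hg]; group
      rw [hfN, map_mul]
      exact mul_mem hgN (hsingle a _ (hf a))
  intro f hf
  exact key f.2.toFinset f hf (by intro y hy; exact (Set.Finite.mem_toFinset _).mpr hy)
end

section
/- A countable group G is elementary amenable if and only if there is no infinite descending sequence G = G_0 ≥ G_1 ≥ ... such that for all n ≥ 0, G_n is nontrivial and there is a finitely generated subgroup K_n ≤ G_n with G_{n+1} = [K_n, K_n] ∩ H_n, where H_n is the intersection of all normal subgroups of K_n of index at most n+1. -/
universe u

/-- A class `P` of groups is an "elementary class" if it contains all finite groups and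
all abelian groups, and is closed under group extensions, countable increasing unions,
subgroups, and quotients. -/
def IsEGClass (P : ∀ (G : Type u) [Group G], Prop) : Prop :=
  (∀ (G : Type u) [Group G], Finite G → P G) ∧
  (∀ (G : Type u) [Group G], (∀ a b : G, a * b = b * a) → P G) ∧
  (∀ (G : Type u) [Group G] (N : Subgroup G) [N.Normal], P N → P (G ⧸ N) → P G) ∧
  (∀ (G : Type u) [Group G] (H : ℕ → Subgroup G), Monotone H → (∀ n, P (H n)) →
      (∀ g : G, ∃ n, g ∈ H n) → P G) ∧
  (∀ (G : Type u) [Group G] (H : Subgroup G), P G → P H) ∧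
  (∀ (G : Type u) [Group G] (N : Subgroup G) [N.Normal], P G → P (G ⧸ N))

/-- A group is elementary amenable if it belongs to every elementary class,
i.e. to the smallest class of groups containing all finite and abelian groups and
closed under extensions, countable increasing unions, subgroups, and quotients. -/
def ElementaryAmenable (G : Type u) [Group G] : Prop :=
  ∀ P : ∀ (H : Type u) [Group H], Prop, IsEGClass P → P G



open Subgroup

/-- Intersection of all normal subgroups of index at most `b`. -/
def Hin (b : ℕ) (X : Type u) [Group X] : Subgroup X :=
  ⨅ (N : Subgroup X) (_ : N.Normal) (_ : N.index ≠ 0) (_ : N.index ≤ b), N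

/-- The derived subgroup used in the chain condition. -/
def Din (b : ℕ) (X : Type u) [Group X] : Subgroup X :=
  ⁅(⊤ : Subgroup X), (⊤ : Subgroup X)⁆ ⊓ Hin b X

lemma mem_Din {b : ℕ} {X : Type u} [Group X] {x : X} :
    x ∈ Din b X ↔ x ∈ ⁅(⊤ : Subgroup X), (⊤ : Subgroup X)⁆ ∧
      ∀ N : Subgroup X, N.Normal → N.index ≠ 0 → N.index ≤ b → x ∈ N := by
  simp [Din, Hin, Subgroup.mem_iInf]

lemma mem_Hin {b : ℕ} {X : Type u} [Group X] {x : X} :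
    x ∈ Hin b X ↔ ∀ N : Subgroup X, N.Normal → N.index ≠ 0 → N.index ≤ b → x ∈ N := by
  simp [Hin, Subgroup.mem_iInf]

lemma map_equiv_Din {X Y : Type u} [Group X] [Group Y] (e : X ≃* Y) (b : ℕ) :
    Subgroup.map e.toMonoidHom (Din b X) = Din b Y := by
  have hC : Subgroup.map e.toMonoidHom ⁅(⊤ : Subgroup X), (⊤ : Subgroup X)⁆
      = ⁅(⊤ : Subgroup Y), (⊤ : Subgroup Y)⁆ := by
    rw [Subgroup.map_commutator, Subgroup.map_top_of_surjective _ e.surjective]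
  ext y
  rw [Subgroup.mem_map_equiv, mem_Din, mem_Din]
  constructor
  · rintro ⟨h1, h2⟩
    constructor
    · rw [← hC, Subgroup.mem_map_equiv]; exact h1
    · intro N' hN' hi0 hib
      have h := h2 (N'.comap e.toMonoidHom) (hN'.comap _)
        (by rwa [Subgroup.index_comap_of_surjective _ e.surjective])
        (by rwa [Subgroup.index_comap_of_surjective _ e.surjective])
      simpa using h
  · rintro ⟨h1, h2⟩
    constructor
    · rw [← hC, Subgroup.mem_map_equiv] at h1; exact h1
    · intro N hN hi0 hib
      have hN' : (N.comap e.symm.toMonoidHom).Normal := hN.comap _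
      have h := h2 (N.comap e.symm.toMonoidHom) hN'
        (by rwa [Subgroup.index_comap_of_surjective _ e.symm.surjective])
        (by rwa [Subgroup.index_comap_of_surjective _ e.symm.surjective])
      simpa using h

lemma map_subtype_commutator_top {G : Type u} [Group G] (K : Subgroup G) :
    Subgroup.map K.subtype ⁅(⊤ : Subgroup K), (⊤ : Subgroup K)⁆ = ⁅K, K⁆ := by
  rw [Subgroup.map_commutator, ← MonoidHom.range_eq_map, Subgroup.range_subtype]

lemma theorem_expr_eq {G : Type u} [Group G] (K : Subgroup G) (b : ℕ) :
    (⁅K, K⁆ ⊓ ⨅ (N : Subgroup K) (_ : N.Normal) (_ : N.index ≠ 0) (_ : N.index ≤ b),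
        Subgroup.map K.subtype N) = Subgroup.map K.subtype (Din b K) := by
  ext x
  simp only [Subgroup.mem_inf, Subgroup.mem_iInf]
  constructor
  · rintro ⟨h1, h2⟩
    rw [← map_subtype_commutator_top] at h1
    obtain ⟨k, hk, rfl⟩ := h1
    refine Subgroup.mem_map.mpr ⟨k, mem_Din.mpr ?_, rfl⟩
    refine ⟨hk, fun N hN hi0 hib => ?_⟩
    obtain ⟨k', hk', hkk⟩ := h2 N hN hi0 hib
    rwa [K.subtype_injective hkk] at hk'
  · rintro ⟨k, hk, rfl⟩
    rw [SetLike.mem_coe, mem_Din] at hk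
    constructor
    · rw [← map_subtype_commutator_top]
      exact ⟨k, hk.1, rfl⟩
    · intro N hN hi0 hib
      exact ⟨k, hk.2 N hN hi0 hib, rfl⟩

lemma map_subtype_Din_le {G : Type u} [Group G] (K : Subgroup G) (b : ℕ) :
    Subgroup.map K.subtype (Din b K) ≤ K :=
  Subgroup.map_subtype_le _

lemma map_Din_le {G W : Type u} [Group G] [Group W] (φ : G →* W) (K : Subgroup G) (b : ℕ) :
    Subgroup.map φ (Subgroup.map K.subtype (Din b K))
      ≤ Subgroup.map (Subgroup.map φ K).subtype (Din b (Subgroup.map φ K)) := by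
  rintro _ ⟨_, ⟨k, hk, rfl⟩, rfl⟩
  have hψs := φ.subgroupMap_surjective K
  set ψ := φ.subgroupMap K with hψ
  refine Subgroup.mem_map.mpr ⟨ψ k, mem_Din.mpr ?_, rfl⟩
  rw [SetLike.mem_coe, mem_Din] at hk
  constructor
  · have : ψ k ∈ Subgroup.map ψ ⁅(⊤ : Subgroup K), (⊤ : Subgroup K)⁆ :=
      Subgroup.mem_map_of_mem _ hk.1
    rw [Subgroup.map_commutator] at this
    exact Subgroup.commutator_mono le_top le_top this
  · intro N hN hi0 hib
    have h := hk.2 (N.comap ψ) (hN.comap _)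
      (by rwa [Subgroup.index_comap_of_surjective _ hψs])
      (by rwa [Subgroup.index_comap_of_surjective _ hψs])
    exact h

lemma map_Din_eq {G W : Type u} [Group G] [Group W] (φ : G →* W)
    (hφ : Function.Injective φ) (K : Subgroup G) (b : ℕ) :
    Subgroup.map φ (Subgroup.map K.subtype (Din b K))
      = Subgroup.map (Subgroup.map φ K).subtype (Din b (Subgroup.map φ K)) := by
  rw [Subgroup.map_map, ← map_equiv_Din (Subgroup.equivMapOfInjective K φ hφ) b,
    Subgroup.map_map]
  congr 1

def BadChain (W : Type u) [Group W] : Prop :=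
  ∃ (k : ℕ) (A : ℕ → Subgroup W), (∀ n, A (n + 1) ≤ A n) ∧
    ∀ n : ℕ, A n ≠ ⊥ ∧ ∃ K : Subgroup W, K ≤ A n ∧ K.FG ∧
      A (n + 1) = Subgroup.map K.subtype (Din (n + k + 1) ↑K)

lemma subgroupOf_map_subtype_of_le {W : Type u} [Group W] {S K : Subgroup W} (hKS : K ≤ S) :
    (K.subgroupOf S).map S.subtype = K := by
  rw [subgroupOf_map_subtype, inf_eq_left.mpr hKS]

lemma subgroupOf_fg {W : Type u} [Group W] {S K : Subgroup W} (hKS : K ≤ S) (h : K.FG) :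
    (K.subgroupOf S).FG := by
  rw [← Group.fg_iff_subgroup_fg] at h ⊢
  have e : ↑(K.subgroupOf S) ≃* ↑K :=
    ((K.subgroupOf S).equivMapOfInjective S.subtype S.subtype_injective).trans
      (MulEquiv.subgroupCongr (subgroupOf_map_subtype_of_le hKS))
  exact Group.fg_of_surjective (f := e.symm.toMonoidHom) e.symm.surjective

lemma badChain_restrict {W : Type u} [Group W] {S : Subgroup W} {k : ℕ} {A : ℕ → Subgroup W}
    (hdec : ∀ n, A (n + 1) ≤ A n)
    (hstep : ∀ n : ℕ, A n ≠ ⊥ ∧ ∃ K : Subgroup W, K ≤ A n ∧ K.FG ∧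
      A (n + 1) = Subgroup.map K.subtype (Din (n + k + 1) ↑K))
    (m : ℕ) (hm : A m ≤ S) : BadChain ↑S := by
  have hAS : ∀ j, A (m + j) ≤ S := by
    intro j
    induction j with
    | zero => exact hm
    | succ j ih => exact le_trans (hdec (m + j)) ih
  refine ⟨k + m, fun j => (A (m + j)).subgroupOf S, ?_, ?_⟩
  · intro j
    exact Subgroup.comap_mono (hdec (m + j))
  · intro j
    obtain ⟨hbot, K, hKA, hKfg, heq⟩ := hstep (m + j)
    constructor
    · intro h
      apply hbot
      have h2 := congrArg (Subgroup.map S.subtype) h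
      rwa [subgroupOf_map_subtype_of_le (hAS j), Subgroup.map_bot] at h2
    · have hKS : K ≤ S := le_trans hKA (hAS j)
      refine ⟨K.subgroupOf S, fun x hx => Subgroup.mem_comap.mpr (hKA hx),
        subgroupOf_fg hKS hKfg, ?_⟩
      apply Subgroup.map_injective S.subtype_injective
      have hb : j + (k + m) + 1 = m + j + k + 1 := by omega
      rw [map_Din_eq S.subtype S.subtype_injective, subgroupOf_map_subtype_of_le (hAS (j+1)),
        subgroupOf_map_subtype_of_le hKS, hb]
      have : m + (j + 1) = m + j + 1 := by omega
      rw [this] at *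
      exact heq

lemma fg_map {G W : Type u} [Group G] [Group W] (φ : G →* W) {K : Subgroup G} (h : K.FG) :
    (Subgroup.map φ K).FG := by
  rw [← Group.fg_iff_subgroup_fg] at h ⊢
  exact Group.fg_of_surjective (f := φ.subgroupMap K) (φ.subgroupMap_surjective K)

lemma not_badChain_of_finite {W : Type u} [Group W] (hW : Finite W) : ¬ BadChain W := by
  rintro ⟨k, A, hdec, hstep⟩
  obtain ⟨-, K, hKA, hfg, heq⟩ := hstep (Nat.card W)
  have hbot : Din (Nat.card W + k + 1) ↥K ≤ (⊥ : Subgroup ↥K) := by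
    intro x hx
    refine (mem_Din.mp hx).2 ⊥ inferInstance ?_ ?_
    · rw [Subgroup.index_bot]
      have : Nonempty ↥K := ⟨1⟩
      exact Nat.card_pos.ne'
    · rw [Subgroup.index_bot]
      have := Subgroup.card_le_card_group K (G := W)
      omega
  have : A (Nat.card W + 1) = ⊥ := by
    rw [heq]
    refine le_bot_iff.mp ?_
    calc Subgroup.map K.subtype (Din (Nat.card W + k + 1) ↥K)
        ≤ Subgroup.map K.subtype ⊥ := Subgroup.map_mono hbot
      _ = ⊥ := Subgroup.map_bot _
  exact (hstep (Nat.card W + 1)).1 this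

open scoped commutatorElement in
lemma not_badChain_of_comm {W : Type u} [Group W] (hW : ∀ a b : W, a * b = b * a) :
    ¬ BadChain W := by
  rintro ⟨k, A, hdec, hstep⟩
  obtain ⟨-, K, hKA, hfg, heq⟩ := hstep 0
  have hbot : Din (0 + k + 1) ↥K ≤ (⊥ : Subgroup ↥K) := by
    intro x hx
    have h1 := (mem_Din.mp hx).1
    have : ⁅(⊤ : Subgroup ↥K), (⊤ : Subgroup ↥K)⁆ ≤ ⊥ := by
      rw [Subgroup.commutator_le]
      intro g1 _ g2 _
      have : ⁅g1, g2⁆ = 1 := by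
        rw [commutatorElement_def]
        apply Subtype.ext
        push_cast
        rw [show (g1 : W) * g2 = g2 * g1 from hW _ _]
        group
      simp [this]
    exact this h1
  have h1 : A 1 = ⊥ := by
    rw [heq]
    refine le_bot_iff.mp ?_
    calc Subgroup.map K.subtype (Din (0 + k + 1) ↥K)
        ≤ Subgroup.map K.subtype ⊥ := Subgroup.map_mono hbot
      _ = ⊥ := Subgroup.map_bot _
  exact (hstep 1).1 h1

lemma badChain_union_split {W : Type u} [Group W] (H : ℕ → Subgroup W) (hmono : Monotone H)
    (hcover : ∀ g : W, ∃ n, g ∈ H n) (h : BadChain W) : ∃ n, BadChain ↥(H n) := by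
  obtain ⟨k, A, hdec, hstep⟩ := h
  obtain ⟨-, K, hKA, hfg, heq⟩ := hstep 0
  obtain ⟨T, hT⟩ := hfg
  choose f hf using hcover
  refine ⟨T.sup f, badChain_restrict hdec hstep 1 ?_⟩
  have hK : K ≤ H (T.sup f) := by
    rw [← hT, Subgroup.closure_le]
    intro t ht
    exact hmono (Finset.le_sup ht) (hf t)
  rw [heq]
  exact le_trans (map_subtype_Din_le _ _) hK

lemma badChain_extension_split {W : Type u} [Group W] (V : Subgroup W) [V.Normal]
    (h : BadChain W) : BadChain ↥V ∨ BadChain (W ⧸ V) := by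
  obtain ⟨k, A, hdec, hstep⟩ := h
  by_cases hc : ∃ m, A m ≤ V
  · obtain ⟨m, hm⟩ := hc
    exact Or.inl (badChain_restrict hdec hstep m hm)
  · push_neg at hc
    right
    choose hbot Kf hle hfg heq using hstep
    set π := QuotientGroup.mk' V with hπ
    have hπs : Function.Surjective π := QuotientGroup.mk'_surjective V
    set Ab : ℕ → Subgroup (W ⧸ V) := fun n =>
      Nat.casesOn n (Subgroup.map π (A 0)) (fun j =>
        Subgroup.map (Subgroup.map π (Kf j)).subtype (Din (j + k + 1) ↥(Subgroup.map π (Kf j))))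
      with hAb
    have hsub : ∀ n, Subgroup.map π (A n) ≤ Ab n := by
      intro n
      cases n with
      | zero => exact le_rfl
      | succ j =>
        rw [heq j]
        exact map_Din_le π (Kf j) (j + k + 1)
    have hmapbot : ∀ n, Subgroup.map π (A n) ≠ ⊥ := by
      intro n hn
      rw [Subgroup.map_eq_bot_iff] at hn
      exact hc n (by rwa [hπ, QuotientGroup.ker_mk'] at hn)
    refine ⟨k, Ab, ?_, ?_⟩
    · intro n
      calc Ab (n + 1) ≤ Subgroup.map π (Kf n) := map_subtype_Din_le _ _
        _ ≤ Subgroup.map π (A n) := Subgroup.map_mono (hle n)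
        _ ≤ Ab n := hsub n
    · intro n
      refine ⟨fun hbotAb => hmapbot n (le_bot_iff.mp (hbotAb ▸ hsub n)), Subgroup.map π (Kf n),
        le_trans (Subgroup.map_mono (hle n)) (hsub n), fg_map π (hfg n), rfl⟩

def QClass (P : ∀ (G : Type u) [Group G], Prop) : ∀ (G : Type u) [Group G], Prop :=
  fun Z _ => ∀ (W : Type u) [Group W] (S : Subgroup Z) (f : ↥S →* W),
    Function.Surjective f → P W

lemma exists_surj_image {Z W : Type u} [Group Z] [Group W] (S T : Subgroup Z)
    (f : ↥S →* W) :
    ∃ g : ↥(Subgroup.comap T.subtype S) →* ↥(Subgroup.map f (Subgroup.comap S.subtype T)),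
      Function.Surjective g := by
  set X := Subgroup.comap T.subtype S with hX
  set SN := Subgroup.comap S.subtype T with hSN
  have hj : ∀ x : ↥X, (T.subtype.comp X.subtype) x ∈ S := fun x => x.2
  set j : ↥X →* ↥S := (T.subtype.comp X.subtype).codRestrict S hj with hjdef
  have hjmem : ∀ x : ↥X, j x ∈ SN := fun x => Subgroup.mem_comap.mpr (x : ↥T).2
  have h2 : ∀ x : ↥X, (f.comp j) x ∈ Subgroup.map f SN :=
    fun x => Subgroup.mem_map.mpr ⟨j x, hjmem x, rfl⟩
  refine ⟨(f.comp j).codRestrict _ h2, ?_⟩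
  rintro ⟨w, hw⟩
  obtain ⟨s, hs, hfs⟩ := Subgroup.mem_map.mp hw
  have hsT : (s : Z) ∈ T := Subgroup.mem_comap.mp hs
  refine ⟨⟨⟨(s : Z), hsT⟩, s.2⟩, ?_⟩
  apply Subtype.ext
  have : j ⟨⟨(s : Z), hsT⟩, s.2⟩ = s := Subtype.ext rfl
  simp only [MonoidHom.codRestrict_apply, MonoidHom.comp_apply, this]
  exact hfs

lemma isEGClass_QClass (P : ∀ (G : Type u) [Group G], Prop)
    (hfin : ∀ (G : Type u) [Group G], Finite G → P G)
    (hab : ∀ (G : Type u) [Group G], (∀ a b : G, a * b = b * a) → P G)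
    (hext : ∀ (G : Type u) [Group G] (N : Subgroup G) [N.Normal], P N → P (G ⧸ N) → P G)
    (hunion : ∀ (G : Type u) [Group G] (H : ℕ → Subgroup G), Monotone H → (∀ n, P (H n)) →
      (∀ g : G, ∃ n, g ∈ H n) → P G) :
    IsEGClass (QClass P) := by
  refine ⟨?_, ?_, ?_, ?_, ?_, ?_⟩
  · -- finite
    intro Z _ hZ W _ S f hf
    exact hfin W (Finite.of_surjective f hf)
  · -- abelian
    intro Z _ hZ W _ S f hf
    refine hab W ?_
    intro a b
    obtain ⟨x, rfl⟩ := hf a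
    obtain ⟨y, rfl⟩ := hf b
    rw [← map_mul, ← map_mul]
    congr 1
    exact Subtype.ext (hZ _ _)
  · -- extension
    intro Z _ N hNnorm hQN hQq W _ S f hf
    set SN := Subgroup.comap S.subtype N with hSN
    set V := Subgroup.map f SN with hV
    haveI hVnorm : V.Normal := Subgroup.Normal.map (Subgroup.normal_comap _) f hf
    have hPV : P ↥V := by
      obtain ⟨g, hg⟩ := exists_surj_image S N f
      exact hQN ↥V (Subgroup.comap N.subtype S) g hg
    have hPQ : P (W ⧸ V) := by
      set π := QuotientGroup.mk' N with hπ
      set ρ := π.subgroupMap S with hρ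
      have hρs : Function.Surjective ρ := π.subgroupMap_surjective S
      set θ := (QuotientGroup.mk' V).comp f with hθ
      have hθs : Function.Surjective θ :=
        (QuotientGroup.mk'_surjective V).comp hf
      have hker : ∀ s ∈ ρ.ker, θ s = 1 := by
        intro s hs
        rw [MonoidHom.mem_ker] at hs
        have h1 : π (s : Z) = 1 := congrArg Subtype.val hs
        have h2 : (s : Z) ∈ N := (QuotientGroup.eq_one_iff _).mp h1
        have h3 : f s ∈ V := Subgroup.mem_map.mpr ⟨s, Subgroup.mem_comap.mpr h2, rfl⟩
        simp only [hθ, MonoidHom.comp_apply]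
        exact (QuotientGroup.eq_one_iff _).mpr h3
      set ψ0 := QuotientGroup.lift ρ.ker θ hker with hψ0
      set e := QuotientGroup.quotientKerEquivOfSurjective ρ hρs with he
      set ψ := ψ0.comp e.symm.toMonoidHom with hψ
      have hψs : Function.Surjective ψ := by
        intro y
        obtain ⟨s, rfl⟩ := hθs y
        refine ⟨e (QuotientGroup.mk s), ?_⟩
        simp only [hψ, MonoidHom.comp_apply, MulEquiv.coe_toMonoidHom,
          MulEquiv.symm_apply_apply]
        rfl
      exact hQq (W ⧸ V) (Subgroup.map π S) ψ hψs
    exact hext W V hPV hPQ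
  · -- union
    intro Z _ Hc hmono hQH hcov W _ S f hf
    refine hunion W (fun n => Subgroup.map f (Subgroup.comap S.subtype (Hc n))) ?_ ?_ ?_
    · intro a b hab'
      exact Subgroup.map_mono (Subgroup.comap_mono (hmono hab'))
    · intro n
      obtain ⟨g, hg⟩ := exists_surj_image S (Hc n) f
      exact hQH n _ (Subgroup.comap (Hc n).subtype S) g hg
    · intro w
      obtain ⟨s, rfl⟩ := hf w
      obtain ⟨n, hn⟩ := hcov (s : Z)
      exact ⟨n, Subgroup.mem_map.mpr ⟨s, Subgroup.mem_comap.mpr hn, rfl⟩⟩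
  · -- subgroup
    intro Z _ S₀ hQ W _ T f hf
    set e := T.equivMapOfInjective S₀.subtype S₀.subtype_injective with he
    exact hQ W (Subgroup.map S₀.subtype T) (f.comp e.symm.toMonoidHom)
      (hf.comp e.symm.surjective)
  · -- quotient
    intro Z _ N hNnorm hQ W _ T f hf
    set π := QuotientGroup.mk' N with hπ
    have h : Subgroup.map π (Subgroup.comap π T) = T :=
      Subgroup.map_comap_eq_self_of_surjective (QuotientGroup.mk'_surjective N) T
    set c := MulEquiv.subgroupCongr h with hc
    exact hQ W (Subgroup.comap π T)
      (f.comp (c.toMonoidHom.comp (π.subgroupMap (Subgroup.comap π T))))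
      (hf.comp (c.surjective.comp (π.subgroupMap_surjective _)))

lemma ea_subquotient {Z : Type u} [Group Z] (h : ElementaryAmenable Z)
    {W : Type u} [Group W] (S : Subgroup Z) (f : ↥S →* W) (hf : Function.Surjective f) :
    ElementaryAmenable W := by
  intro P hP
  have hQ : QClass P Z :=
    h (QClass P) (isEGClass_QClass P hP.1 hP.2.1 hP.2.2.1 hP.2.2.2.1)
  exact hQ W S f hf

lemma ea_of_surjective {Z W : Type u} [Group Z] [Group W] (f : Z →* W)
    (hf : Function.Surjective f) (h : ElementaryAmenable Z) : ElementaryAmenable W :=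
  ea_subquotient h ⊤ (f.comp (Subgroup.topEquiv (G := Z)).toMonoidHom)
    (hf.comp Subgroup.topEquiv.surjective)

lemma ea_of_mulEquiv {Z W : Type u} [Group Z] [Group W] (e : W ≃* Z)
    (h : ElementaryAmenable Z) : ElementaryAmenable W :=
  ea_of_surjective e.symm.toMonoidHom e.symm.surjective h

lemma ea_of_injective {Z W : Type u} [Group Z] [Group W] (f : W →* Z)
    (hf : Function.Injective f) (h : ElementaryAmenable Z) : ElementaryAmenable W :=
  ea_subquotient h f.range (MonoidHom.ofInjective hf).symm.toMonoidHom
    (MonoidHom.ofInjective hf).symm.surjective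

lemma ea_subgroup {Z : Type u} [Group Z] (S : Subgroup Z) (h : ElementaryAmenable Z) :
    ElementaryAmenable ↥S :=
  fun P hP => hP.2.2.2.2.1 Z S (h P hP)

lemma ea_extension {Z : Type u} [Group Z] (N : Subgroup Z) [N.Normal]
    (hN : ElementaryAmenable ↥N) (hq : ElementaryAmenable (Z ⧸ N)) :
    ElementaryAmenable Z :=
  fun P hP => hP.2.2.1 Z N (hN P hP) (hq P hP)

lemma ea_finite {Z : Type u} [Group Z] (h : Finite Z) : ElementaryAmenable Z :=
  fun P hP => hP.1 Z h

lemma ea_comm {Z : Type u} [Group Z] (h : ∀ a b : Z, a * b = b * a) :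
    ElementaryAmenable Z :=
  fun P hP => hP.2.1 Z h

lemma ea_prod {A B : Type u} [Group A] [Group B] (hA : ElementaryAmenable A)
    (hB : ElementaryAmenable B) : ElementaryAmenable (A × B) := by
  set N := (MonoidHom.fst A B).ker with hN
  have hNea : ElementaryAmenable ↥N := by
    refine ea_of_injective ((MonoidHom.snd A B).comp N.subtype) ?_ hB
    intro x y hxy
    apply Subtype.ext
    have hx : (x : A × B).1 = 1 := x.2
    have hy : (y : A × B).1 = 1 := y.2
    exact Prod.ext (hx.trans hy.symm) hxy
  have hq : ElementaryAmenable ((A × B) ⧸ N) :=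
    ea_of_mulEquiv (QuotientGroup.quotientKerEquivOfSurjective (MonoidHom.fst A B)
      Prod.fst_surjective) hA
  exact ea_extension N hNea hq

lemma finite_monoidHom {K P : Type*} [Group K] [Group P] [Group.FG K] [Finite P] :
    Finite (K →* P) := by
  obtain ⟨T, hT⟩ := Group.fg_def.mp ‹Group.FG K›
  have hinj : Function.Injective (fun (f : K →* P) => fun t : ↥(T : Set K) => f ↑t) := by
    intro f g h
    refine MonoidHom.eq_of_eqOn_dense hT ?_
    intro x hx
    exact congrFun h ⟨x, hx⟩
  exact Finite.of_injective _ hinj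

instance Hin_normal (b : ℕ) (X : Type u) [Group X] : (Hin b X).Normal := by
  constructor
  intro x hx g
  rw [mem_Hin] at hx ⊢
  intro N hN h1 h2
  exact hN.conj_mem x (hx N hN h1 h2) g

instance Din_normal (b : ℕ) (X : Type u) [Group X] : (Din b X).Normal := by
  have h1 : (⁅(⊤ : Subgroup X), (⊤ : Subgroup X)⁆).Normal := inferInstance
  have h2 : (Hin b X).Normal := inferInstance
  constructor
  intro x hx g
  exact Subgroup.mem_inf.mpr ⟨h1.conj_mem x (Subgroup.mem_inf.mp hx).1 g,
    h2.conj_mem x (Subgroup.mem_inf.mp hx).2 g⟩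

lemma Hin_finiteIndex (b : ℕ) (X : Type u) [Group X] [Group.FG X] :
    (Hin b X).FiniteIndex := by
  set P := Equiv.Perm (Fin b) with hP
  set Φ : X →* ((X →* P) → P) := Pi.monoidHom (fun f => f) with hΦ
  have hker : Φ.ker ≤ Hin b X := by
    intro x hx
    rw [MonoidHom.mem_ker] at hx
    rw [mem_Hin]
    intro N hN h1 h2
    haveI : Finite (X ⧸ N) := by
      have : Nat.card (X ⧸ N) ≠ 0 := h1
      exact (Nat.card_ne_zero.mp this).2
    haveI : Fintype (X ⧸ N) := Fintype.ofFinite _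
    have hcard : Fintype.card (X ⧸ N) ≤ Fintype.card (Fin b) := by
      rw [Fintype.card_fin, ← Nat.card_eq_fintype_card]
      exact h2
    obtain ⟨ι⟩ := Function.Embedding.nonempty_of_card_le hcard
    set φN := MulAction.toPermHom X (X ⧸ N) with hφN
    set f : X →* P := (Equiv.Perm.viaEmbeddingHom ι).comp φN with hf
    have hfx : f x = 1 := congrFun hx f
    have hφNx : φN x = 1 := by
      apply Equiv.Perm.viaEmbeddingHom_injective ι
      rw [← MonoidHom.comp_apply, ← hf, hfx, map_one]
    have : x • ((1 : X) : X ⧸ N) = ((1 : X) : X ⧸ N) := by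
      have := congrArg (fun p => p ((1 : X) : X ⧸ N)) hφNx
      simpa [hφN, MulAction.toPermHom] using this
    rw [MulAction.Quotient.smul_mk, smul_eq_mul, mul_one, QuotientGroup.mk_one] at this
    exact (QuotientGroup.eq_one_iff x).mp this
  haveI : Finite (X →* P) := finite_monoidHom
  haveI : Finite ((X →* P) → P) := by
    haveI : Finite P := by
      rw [hP]; infer_instance
    exact Pi.finite
  haveI : Finite (X ⧸ Φ.ker) := by
    have e := QuotientGroup.quotientKerEquivRange Φ
    exact Finite.of_equiv _ e.symm.toEquiv
  haveI : Φ.ker.FiniteIndex := Subgroup.finiteIndex_of_finite_quotient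
  constructor
  intro h
  have hdvd := Subgroup.index_dvd_of_le hker
  rw [h] at hdvd
  exact Subgroup.FiniteIndex.index_ne_zero (Nat.eq_zero_of_zero_dvd hdvd)

open scoped commutatorElement in
lemma ea_quotient_Din (b : ℕ) (X : Type u) [Group X] [Group.FG X] :
    ElementaryAmenable (X ⧸ Din b X) := by
  set C := ⁅(⊤ : Subgroup X), (⊤ : Subgroup X)⁆ with hC
  set f := (QuotientGroup.mk' C).prod (QuotientGroup.mk' (Hin b X)) with hf
  have hker : Din b X = f.ker := by
    rw [hf, MonoidHom.ker_prod, QuotientGroup.ker_mk', QuotientGroup.ker_mk']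
    rfl
  have e : (X ⧸ Din b X) ≃* f.range :=
    (QuotientGroup.quotientMulEquivOfEq hker).trans
      (QuotientGroup.quotientKerEquivRange f)
  refine ea_of_mulEquiv e (ea_subgroup _ (ea_prod ?_ ?_))
  · refine ea_comm ?_
    intro a b'
    induction a using QuotientGroup.induction_on
    induction b' using QuotientGroup.induction_on
    rename_i x y
    rw [← QuotientGroup.mk_mul, ← QuotientGroup.mk_mul]
    apply QuotientGroup.eq.mpr
    have : (x * y)⁻¹ * (y * x) = ⁅y⁻¹, x⁻¹⁆ := by
      rw [commutatorElement_def]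
      group
    rw [this]
    exact Subgroup.commutator_mem_commutator (Subgroup.mem_top _) (Subgroup.mem_top _)
  · haveI := Hin_finiteIndex b X
    exact ea_finite inferInstance

lemma ea_of_ea_Din (b : ℕ) (X : Type u) [Group X] [Group.FG X]
    (h : ElementaryAmenable ↥(Din b X)) : ElementaryAmenable X :=
  ea_extension (Din b X) h (ea_quotient_Din b X)

lemma exists_bad_K {G : Type u} [Group G] [Countable G] (A : Subgroup G)
    (hA : ¬ ElementaryAmenable ↥A) (b : ℕ) :
    ∃ K : Subgroup G, K ≤ A ∧ K.FG ∧
      ¬ ElementaryAmenable ↥(Subgroup.map K.subtype (Din b ↥K)) := by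
  by_contra hcon
  push_neg at hcon
  apply hA
  have hfg : ∀ B : Subgroup ↥A, B.FG → ElementaryAmenable ↥B := by
    intro B hB
    set K := Subgroup.map A.subtype B with hK
    have hKle : K ≤ A := Subgroup.map_subtype_le B
    have hKfg : K.FG := fg_map A.subtype hB
    have h1 : ElementaryAmenable ↥(Subgroup.map K.subtype (Din b ↥K)) := hcon K hKle hKfg
    have h2 : ElementaryAmenable ↥(Din b ↥K) :=
      ea_of_mulEquiv ((Din b ↥K).equivMapOfInjective K.subtype K.subtype_injective) h1
    haveI : Group.FG ↥K := (Group.fg_iff_subgroup_fg K).mpr hKfg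
    have h3 : ElementaryAmenable ↥K := ea_of_ea_Din b ↥K h2
    exact ea_of_mulEquiv (B.equivMapOfInjective A.subtype A.subtype_injective) h3
  obtain ⟨f, hf⟩ := exists_surjective_nat ↥A
  intro P hP
  refine hP.2.2.2.1 ↥A (fun n => Subgroup.closure (f '' {i | i < n})) ?_ ?_ ?_
  · intro m n hmn
    exact Subgroup.closure_mono (Set.image_mono (fun i (hi : i < m) => lt_of_lt_of_le hi hmn))
  · intro n
    have hfgn : (Subgroup.closure (f '' {i | i < n})).FG := by
      rw [Subgroup.fg_iff]
      exact ⟨f '' {i | i < n}, rfl, Set.Finite.image f (Set.finite_lt_nat n)⟩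
    exact hfg _ hfgn P hP
  · intro a
    obtain ⟨i, rfl⟩ := hf a
    exact ⟨i + 1, Subgroup.subset_closure ⟨i, Nat.lt_succ_self i, rfl⟩⟩

noncomputable def chainAux (G : Type u) [Group G] [Countable G]
    (h : ¬ ElementaryAmenable G) : ℕ → {A : Subgroup G // ¬ ElementaryAmenable ↥A}
  | 0 => ⟨⊤, fun he => h (ea_of_mulEquiv Subgroup.topEquiv.symm he)⟩
  | (n+1) =>
    let p := chainAux G h n
    ⟨Subgroup.map (exists_bad_K p.1 p.2 (n+1)).choose.subtype
        (Din (n+1) ↥(exists_bad_K p.1 p.2 (n+1)).choose),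
      (exists_bad_K p.1 p.2 (n+1)).choose_spec.2.2⟩

lemma chain_of_not_ea {G : Type u} [Group G] [Countable G]
    (h : ¬ ElementaryAmenable G) :
    ∃ Gs : ℕ → Subgroup G, Gs 0 = ⊤ ∧ (∀ n, Gs (n + 1) ≤ Gs n) ∧
      ∀ n : ℕ, Gs n ≠ ⊥ ∧ ∃ K : Subgroup G, K ≤ Gs n ∧ K.FG ∧
        Gs (n + 1) = Subgroup.map K.subtype (Din (n + 1) ↥K) := by
  refine ⟨fun n => (chainAux G h n).1, rfl, ?_, ?_⟩
  · intro n
    show (chainAux G h (n+1)).1 ≤ (chainAux G h n).1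
    have hstep : (chainAux G h (n+1)).1 = Subgroup.map
        (exists_bad_K (chainAux G h n).1 (chainAux G h n).2 (n+1)).choose.subtype
        (Din (n+1) ↥(exists_bad_K (chainAux G h n).1 (chainAux G h n).2 (n+1)).choose) := by
      simp [chainAux]
    rw [hstep]
    exact le_trans (map_subtype_Din_le _ _)
      (exists_bad_K (chainAux G h n).1 (chainAux G h n).2 (n+1)).choose_spec.1
  · intro n
    constructor
    · intro hbot
      replace hbot : (chainAux G h n).1 = ⊥ := hbot
      apply (chainAux G h n).2
      have : ElementaryAmenable ↥((chainAux G h n).1) := by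
        rw [hbot]
        exact ea_finite inferInstance
      exact this
    · refine ⟨(exists_bad_K (chainAux G h n).1 (chainAux G h n).2 (n+1)).choose,
        (exists_bad_K (chainAux G h n).1 (chainAux G h n).2 (n+1)).choose_spec.1,
        (exists_bad_K (chainAux G h n).1 (chainAux G h n).2 (n+1)).choose_spec.2.1, ?_⟩
      simp [chainAux]

/-- A countable group `G` is elementary amenable if and only if there is no infinite
descending sequence `G = G₀ ≥ G₁ ≥ ...` of subgroups such that for all `n`, `Gₙ` is
nontrivial and there is a finitely generated subgroup `Kₙ ≤ Gₙ` with
`G_{n+1} = [Kₙ, Kₙ] ∩ Hₙ`, where `Hₙ` is the intersection of all normal subgroups of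
`Kₙ` of index at most `n + 1`. -/
theorem elementaryAmenable_iff_no_descending_chain (G : Type) [Group G] [Countable G] :
    ElementaryAmenable G ↔
      ¬ ∃ Gs : ℕ → Subgroup G, Gs 0 = ⊤ ∧ (∀ n, Gs (n + 1) ≤ Gs n) ∧
        ∀ n : ℕ, Gs n ≠ ⊥ ∧ ∃ K : Subgroup G, K ≤ Gs n ∧ K.FG ∧
          Gs (n + 1) = ⁅K, K⁆ ⊓
            ⨅ (N : Subgroup K) (_ : N.Normal) (_ : N.index ≠ 0) (_ : N.index ≤ n + 1),
              Subgroup.map K.subtype N := by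
  constructor
  · intro hEA
    rintro ⟨Gs, hGs0, hdec, hstep⟩
    have hnb : ¬ BadChain G := by
      have hQ := hEA (QClass (fun W _ => ¬ BadChain W))
        (isEGClass_QClass _
          (fun W _ hfin => not_badChain_of_finite hfin)
          (fun W _ hcomm => not_badChain_of_comm hcomm)
          (fun W _ N _ h1 h2 hb => (badChain_extension_split N hb).elim h1 h2)
          (fun W _ H hm hP hcov hb => by
            obtain ⟨n, hbn⟩ := badChain_union_split H hm hcov hb
            exact hP n hbn))
      exact hQ G ⊤ (Subgroup.topEquiv (G := G)).toMonoidHom Subgroup.topEquiv.surjective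
    apply hnb
    refine ⟨0, Gs, hdec, fun n => ⟨(hstep n).1, ?_⟩⟩
    obtain ⟨K, h1, h2, h3⟩ := (hstep n).2
    exact ⟨K, h1, h2, by rw [h3, theorem_expr_eq]⟩
  · intro hno
    by_contra hEA
    apply hno
    obtain ⟨Gs, h0, hdec, hstep⟩ := chain_of_not_ea hEA
    refine ⟨Gs, h0, hdec, fun n => ⟨(hstep n).1, ?_⟩⟩
    obtain ⟨K, h1, h2, h3⟩ := (hstep n).2
    exact ⟨K, h1, h2, by rw [h3, theorem_expr_eq]⟩
end
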